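/- Let x̄ be feasible for the disjunctive program (P) and let u ∈ T_lin(x̄). If the directional linear independence constraint qualification LICQ(u) holds at x̄, then for every splitting F = (F₁,F₂), Ω = Ω₁ × Ω₂ the multiplier set Λ⁰(x̄;u) is empty; in particular, every λ ∈ N(F(x̄);Ω;∇F(x̄)u) with ∇F(x̄)ᵀλ = 0 and λ₁ ≠ 0 cannot exist. -/

import Mathlib

noncomputable section

open Filter Topology Set

/-- Euclidean space `ℝ^n`. -/
abbrev Euc (n : ℕ) : Type := EuclideanSpace ℝ (Fin n)

variable {E : Type*} [NormedAddCommGroup E] [NormedSpace ℝ E]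
variable {Y : Type*} [NormedAddCommGroup Y] [NormedSpace ℝ Y]

/-- The contingent (Bouligand/tangent) cone `T(x;Ω)`; empty when `x ∉ Ω`. -/
def tcone (Ω : Set E) (x : E) : Set E :=
  {u | x ∈ Ω ∧ ∃ t : ℕ → ℝ, ∃ w : ℕ → E, (∀ k, 0 < t k) ∧
    Tendsto t atTop (𝓝 0) ∧ Tendsto w atTop (𝓝 u) ∧ ∀ k, x + t k • w k ∈ Ω}

/-- The Fréchet (regular) normal cone `N̂(x;Ω)`, viewed as a set of continuous
linear functionals; empty when `x ∉ Ω`. -/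
def fnc (Ω : Set E) (x : E) : Set (E →L[ℝ] ℝ) :=
  {ξ | x ∈ Ω ∧ ∀ ε : ℝ, 0 < ε → ∃ δ : ℝ, 0 < δ ∧
    ∀ y ∈ Ω, ‖y - x‖ < δ → ξ (y - x) ≤ ε * ‖y - x‖}

/-- The limiting (Mordukhovich) normal cone `N(x;Ω)`; empty when `x ∉ Ω`. -/
def lnc (Ω : Set E) (x : E) : Set (E →L[ℝ] ℝ) :=
  {ξ | x ∈ Ω ∧ ∃ xk : ℕ → E, ∃ ξk : ℕ → (E →L[ℝ] ℝ),
    Tendsto xk atTop (𝓝 x) ∧ Tendsto ξk atTop (𝓝 ξ) ∧ ∀ k, ξk k ∈ fnc Ω (xk k)}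

/-- The directional limiting normal cone `N(x;Ω;u)`; empty when `x ∉ Ω`. -/
def dlnc (Ω : Set E) (x u : E) : Set (E →L[ℝ] ℝ) :=
  {ξ | x ∈ Ω ∧ ∃ t : ℕ → ℝ, ∃ w : ℕ → E, ∃ ξk : ℕ → (E →L[ℝ] ℝ), (∀ k, 0 < t k) ∧
    Tendsto t atTop (𝓝 0) ∧ Tendsto w atTop (𝓝 u) ∧ Tendsto ξk atTop (𝓝 ξ) ∧
    ∀ k, ξk k ∈ fnc Ω (x + t k • w k)}

/-- A convex polyhedron: a finite intersection of closed halfspaces. -/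
def IsPolyhedron (P : Set E) : Prop :=
  ∃ k : ℕ, ∃ a : Fin k → (E →L[ℝ] ℝ), ∃ b : Fin k → ℝ, P = {x | ∀ j, a j x ≤ b j}

/-- A union of finitely many convex polyhedra. -/
def IsFinUnionPolyhedra (Ω : Set E) : Prop :=
  ∃ p : ℕ, ∃ P : Fin p → Set E, (∀ i, IsPolyhedron (P i)) ∧ Ω = ⋃ i, P i

/-- The constraint multifunction `M(x) = F(x) - Ω`. -/
def cmap (F : E → Y) (Ω : Set Y) : E → Set Y := fun x => {y | F x - y ∈ Ω}

/-- Metric subregularity of `M` at `(x̄,ȳ) ∈ gph M`. -/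
def SubregAt (M : E → Set Y) (x' : E) (y' : Y) : Prop :=
  y' ∈ M x' ∧ ∃ κ : ℝ, 0 < κ ∧ ∃ ε : ℝ, 0 < ε ∧ ∀ x : E, dist x x' < ε →
    EMetric.infEdist x {z | y' ∈ M z} ≤ ENNReal.ofReal κ * EMetric.infEdist y' (M x)

/-- The directional neighborhood `V_{ρ,δ}(u)`. -/
def dirNbhd (u : E) (ρ δ : ℝ) : Set E :=
  {z | ‖z‖ ≤ ρ ∧ ‖‖u‖ • z - ‖z‖ • u‖ ≤ δ * (‖z‖ * ‖u‖)}

/-- Metric subregularity of `M` in direction `u` at `(x̄,ȳ) ∈ gph M`. -/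
def SubregDir (M : E → Set Y) (x' : E) (y' : Y) (u : E) : Prop :=
  y' ∈ M x' ∧ ∃ ρ : ℝ, 0 < ρ ∧ ∃ δ : ℝ, 0 < δ ∧ ∃ κ : ℝ, 0 < κ ∧
    ∀ z ∈ dirNbhd u ρ δ,
      EMetric.infEdist (x' + z) {z' | y' ∈ M z'} ≤
        ENNReal.ofReal κ * EMetric.infEdist y' (M (x' + z))

/-- Mixed metric regularity/subregularity of `M = (M₁,M₂)` at `(x̄,(ȳ₁,ȳ₂))`. -/
def MixedRegSubreg {Y₁ Y₂ : Type*} [NormedAddCommGroup Y₁] [NormedSpace ℝ Y₁]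
    [NormedAddCommGroup Y₂] [NormedSpace ℝ Y₂]
    (M₁ : E → Set Y₁) (M₂ : E → Set Y₂) (x' : E) (y₁' : Y₁) (y₂' : Y₂) : Prop :=
  y₁' ∈ M₁ x' ∧ y₂' ∈ M₂ x' ∧ ∃ κ : ℝ, 0 < κ ∧ ∃ ε : ℝ, 0 < ε ∧
    ∀ x : E, ∀ y₁ : Y₁, dist x x' < ε → dist y₁ y₁' < ε →
      EMetric.infEdist x {z | y₁ ∈ M₁ z ∧ y₂' ∈ M₂ z} ≤
        ENNReal.ofReal κ * EMetric.infEdist (y₁, y₂') (M₁ x ×ˢ M₂ x)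

/-- The pair mapping `F = (F₁,F₂)`. -/
def PairMap {n m₁ m₂ : ℕ} (F₁ : Euc n → Euc m₁) (F₂ : Euc n → Euc m₂) :
    Euc n → Euc m₁ × Euc m₂ := fun x => (F₁ x, F₂ x)

/-- The multiplier set `Λ^{λ₀}(x̄;u)` for the splitting `F = (F₁,F₂)`,
`Ω = Ω₁ × Ω₂`: multipliers `λ = (λ₁,λ₂)` in the directional limiting normal
cone with vanishing gradient of the generalized Lagrangian and
`λ₀ + ‖λ₁‖ ≠ 0`. -/
def Lam {n m₁ m₂ : ℕ} (f : Euc n → ℝ) (F₁ : Euc n → Euc m₁) (F₂ : Euc n → Euc m₂)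
    (Ω₁ : Set (Euc m₁)) (Ω₂ : Set (Euc m₂)) (xb u : Euc n) (l0 : ℝ) :
    Set ((Euc m₁ × Euc m₂) →L[ℝ] ℝ) :=
  {μ | μ ∈ dlnc (Ω₁ ×ˢ Ω₂) (PairMap F₁ F₂ xb) (fderiv ℝ (PairMap F₁ F₂) xb u) ∧
    l0 • fderiv ℝ f xb + μ.comp (fderiv ℝ (PairMap F₁ F₂) xb) = 0 ∧
    l0 + ‖μ.comp (ContinuousLinearMap.inl ℝ (Euc m₁) (Euc m₂))‖ ≠ 0}

/-- The multiplier set `Λ̂^{λ₀}(x̄;u)`: as `Λ^{λ₀}(x̄;u)` but with the Fréchet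
normal cone to the tangent cone. -/
def LamHat {n m₁ m₂ : ℕ} (f : Euc n → ℝ) (F₁ : Euc n → Euc m₁) (F₂ : Euc n → Euc m₂)
    (Ω₁ : Set (Euc m₁)) (Ω₂ : Set (Euc m₂)) (xb u : Euc n) (l0 : ℝ) :
    Set ((Euc m₁ × Euc m₂) →L[ℝ] ℝ) :=
  {μ | μ ∈ fnc (tcone (Ω₁ ×ˢ Ω₂) (PairMap F₁ F₂ xb)) (fderiv ℝ (PairMap F₁ F₂) xb u) ∧
    l0 • fderiv ℝ f xb + μ.comp (fderiv ℝ (PairMap F₁ F₂) xb) = 0 ∧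
    l0 + ‖μ.comp (ContinuousLinearMap.inl ℝ (Euc m₁) (Euc m₂))‖ ≠ 0}
section AuxLemmas

variable {E' : Type*} [NormedAddCommGroup E'] [NormedSpace ℝ E']
variable {F' : Type*} [NormedAddCommGroup F'] [NormedSpace ℝ F']

lemma aux_tendsto_div (c : ℝ) : Tendsto (fun m : ℕ => c / (m + 1)) atTop (𝓝 0) := by
  have h := tendsto_one_div_add_atTop_nhds_zero_nat.const_mul c
  simpa [mul_one_div, div_eq_mul_inv] using h

lemma isPolyhedron_empty : IsPolyhedron (∅ : Set E') := by
  refine ⟨1, fun _ => 0, fun _ => -1, ?_⟩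
  ext x
  simp

lemma IsPolyhedron.isClosed' {P : Set E'} (h : IsPolyhedron P) : IsClosed P := by
  obtain ⟨k, a, b, rfl⟩ := h
  have : {x : E' | ∀ j, a j x ≤ b j} = ⋂ j, {x | a j x ≤ b j} := by
    ext x; simp [Set.mem_iInter]
  rw [this]
  exact isClosed_iInter fun j => isClosed_le (a j).continuous continuous_const

lemma tcone_smul {Ω : Set E'} {x z : E'} (hz : z ∈ tcone Ω x) {c : ℝ} (hc : 0 < c) :
    c • z ∈ tcone Ω x := by
  obtain ⟨hx, t, w, ht, ht0, hw, hmem⟩ := hz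
  refine ⟨hx, fun k => t k / c, fun k => c • w k, fun k => div_pos (ht k) hc, ?_, hw.const_smul c,
    fun k => ?_⟩
  · simpa using ht0.div_const c
  · have h : (t k / c) • (c • w k) = t k • w k := by
      rw [smul_smul, div_mul_cancel₀ _ (ne_of_gt hc)]
    rw [h]; exact hmem k

lemma fnc_nonpos {Ω : Set E'} {x v : E'} {ξ : E' →L[ℝ] ℝ} (hξ : ξ ∈ fnc Ω x)
    (h : ∃ s₀ : ℝ, 0 < s₀ ∧ ∀ s : ℝ, 0 < s → s ≤ s₀ → x + s • v ∈ Ω) : ξ v ≤ 0 := by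
  obtain ⟨hx, hF⟩ := hξ
  obtain ⟨s₀, hs₀, hmem⟩ := h
  by_contra hpos
  push_neg at hpos
  have hε : (0:ℝ) < ξ v / (2 * (‖v‖ + 1)) := by positivity
  obtain ⟨δ, hδ, hineq⟩ := hF _ hε
  set s : ℝ := min s₀ (δ / (2 * (‖v‖ + 1))) with hs
  have hspos : 0 < s := lt_min hs₀ (by positivity)
  have hsv : s * ‖v‖ < δ := by
    have h1 : s ≤ δ / (2 * (‖v‖ + 1)) := min_le_right _ _
    have h2 : s * ‖v‖ ≤ δ / (2 * (‖v‖ + 1)) * ‖v‖ :=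
      mul_le_mul_of_nonneg_right h1 (norm_nonneg v)
    have h3 : δ / (2 * (‖v‖ + 1)) * ‖v‖ < δ := by
      rw [div_mul_eq_mul_div, div_lt_iff₀ (by positivity)]
      nlinarith [norm_nonneg v]
    linarith
  have hmem' : x + s • v ∈ Ω := hmem s hspos (min_le_left _ _)
  have hkey := hineq _ hmem' (by simpa [norm_smul, abs_of_pos hspos] using hsv)
  rw [add_sub_cancel_left, map_smul, smul_eq_mul, norm_smul, Real.norm_eq_abs, abs_of_pos hspos] at hkey
  have hfin : ξ v ≤ ξ v / (2 * (‖v‖ + 1)) * ‖v‖ := by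
    have := (mul_le_mul_iff_right₀ hspos).1 (by linarith [hkey] : s * ξ v ≤ s * (ξ v / (2 * (‖v‖ + 1)) * ‖v‖))
    exact this
  have : ξ v / (2 * (‖v‖ + 1)) * ‖v‖ < ξ v := by
    rw [div_mul_eq_mul_div, div_lt_iff₀ (by positivity)]
    nlinarith [norm_nonneg v]
  linarith

end AuxLemmas
section AuxLemmas2

variable {E' : Type*} [NormedAddCommGroup E'] [NormedSpace ℝ E']
variable {F' : Type*} [NormedAddCommGroup F'] [NormedSpace ℝ F']

lemma isPolyhedron_prod {P : Set E'} {Q : Set F'} (hP : IsPolyhedron P) (hQ : IsPolyhedron Q) :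
    IsPolyhedron (P ×ˢ Q) := by
  obtain ⟨k₁, a₁, b₁, rfl⟩ := hP
  obtain ⟨k₂, a₂, b₂, rfl⟩ := hQ
  refine ⟨k₁ + k₂,
    Fin.addCases (fun j => (a₁ j).comp (ContinuousLinearMap.fst ℝ E' F'))
      (fun j => (a₂ j).comp (ContinuousLinearMap.snd ℝ E' F')),
    Fin.addCases b₁ b₂, ?_⟩
  ext ⟨y, z⟩
  simp only [Set.mem_prod, Set.mem_setOf_eq]
  constructor
  · rintro ⟨h1, h2⟩ j
    induction j using Fin.addCases with
    | left j0 => simpa using h1 j0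
    | right j0 => simpa using h2 j0
  · intro h
    constructor
    · intro j0; simpa using h (Fin.castAdd k₂ j0)
    · intro j0; simpa using h (Fin.natAdd k₁ j0)

lemma isFinUnionPolyhedra_prod {Ω₁ : Set E'} {Ω₂ : Set F'}
    (h₁ : IsFinUnionPolyhedra Ω₁) (h₂ : IsFinUnionPolyhedra Ω₂) :
    IsFinUnionPolyhedra (Ω₁ ×ˢ Ω₂) := by
  obtain ⟨p₁, P₁, hP₁, rfl⟩ := h₁
  obtain ⟨p₂, P₂, hP₂, rfl⟩ := h₂
  refine ⟨p₁ * p₂, fun m => P₁ (finProdFinEquiv.symm m).1 ×ˢ P₂ (finProdFinEquiv.symm m).2,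
    fun m => isPolyhedron_prod (hP₁ _) (hP₂ _), ?_⟩
  ext ⟨y, z⟩
  simp only [Set.mem_prod, Set.mem_iUnion]
  constructor
  · rintro ⟨⟨i, hi⟩, ⟨j, hj⟩⟩
    refine ⟨finProdFinEquiv (i, j), ?_⟩
    simpa [Set.mem_prod] using And.intro hi hj
  · rintro ⟨m, hm⟩
    exact ⟨⟨_, hm.1⟩, ⟨_, hm.2⟩⟩

end AuxLemmas2
section AuxLemmas3

variable {E' : Type*} [NormedAddCommGroup E'] [NormedSpace ℝ E']

lemma tcone_struct {Ω : Set E'} (hΩ : IsFinUnionPolyhedra Ω) {x : E'} (hx : x ∈ Ω) :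
    IsFinUnionPolyhedra (tcone Ω x) ∧
    ∃ ε : ℝ, 0 < ε ∧ ∀ z : E', ‖z‖ < ε → (x + z ∈ Ω ↔ z ∈ tcone Ω x) := by
  classical
  obtain ⟨p, P, hP, rfl⟩ := hΩ
  choose k a b hrep using hP
  have hmemP : ∀ i y, y ∈ P i ↔ ∀ j, a i j y ≤ b i j := by
    intro i y; rw [hrep i]; exact Iff.rfl
  have hPclosed : ∀ i, IsClosed (P i) := fun i =>
    IsPolyhedron.isClosed' ⟨k i, a i, b i, hrep i⟩
  set C : Fin p → Set E' := fun i =>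
    if x ∈ P i then {z | ∀ j, (if a i j x = b i j then a i j z else 0) ≤ 0} else ∅ with hC
  -- inclusion C i ⊆ tcone
  have hsub : ∀ i, C i ⊆ tcone (⋃ i', P i') x := by
    intro i z hz
    by_cases hxi : x ∈ P i
    · simp only [hC, if_pos hxi, Set.mem_setOf_eq] at hz
      have hxPi : ∀ j, a i j x ≤ b i j := (hmemP i x).1 hxi
      have hev : ∀ᶠ τ in 𝓝[>] (0:ℝ), x + τ • z ∈ P i := by
        have hall : ∀ j, ∀ᶠ τ in 𝓝[>] (0:ℝ), a i j (x + τ • z) ≤ b i j := by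
          intro j
          by_cases hj : a i j x = b i j
          · have hzj : a i j z ≤ 0 := by have h := hz j; rwa [if_pos hj] at h
            refine eventually_nhdsWithin_of_forall fun τ hτ => ?_
            have hτ0 : (0:ℝ) < τ := hτ
            rw [map_add, map_smul, smul_eq_mul]
            nlinarith [hxPi j]
          · have hlt : a i j x < b i j := lt_of_le_of_ne (hxPi j) hj
            have hcont : Tendsto (fun τ : ℝ => a i j (x + τ • z)) (𝓝 0) (𝓝 (a i j x)) := by
              have hc : Continuous fun τ : ℝ => a i j (x + τ • z) :=
                (a i j).continuous.comp (continuous_const.add (continuous_id.smul continuous_const))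
              have h0 := hc.tendsto 0
              simpa using h0
            exact ((hcont.eventually_lt_const hlt).mono fun τ h => h.le).filter_mono
              nhdsWithin_le_nhds
        have := eventually_all.2 hall
        exact this.mono fun τ hτ => (hmemP i _).2 hτ
      obtain ⟨t₀, ht₀, hIoc⟩ := mem_nhdsGT_iff_exists_Ioc_subset.1 hev
      have ht₀' : (0:ℝ) < t₀ := ht₀
      refine ⟨hx, fun m => t₀ / (m + 1), fun _ => z, fun m => div_pos ht₀' (by positivity),
        aux_tendsto_div t₀, tendsto_const_nhds, fun m => ?_⟩
      have hmem : t₀ / (m + 1) ∈ Set.Ioc (0:ℝ) t₀ :=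
        ⟨div_pos ht₀' (by positivity), div_le_self ht₀'.le (by
          have : (0:ℝ) ≤ (m:ℝ) := Nat.cast_nonneg m
          linarith)⟩
      exact Set.mem_iUnion.2 ⟨i, hIoc hmem⟩
    · simp only [hC, if_neg hxi] at hz
      exact absurd hz (Set.notMem_empty z)
  -- inclusion tcone ⊆ ⋃ C i
  have hsup : tcone (⋃ i', P i') x ⊆ ⋃ i', C i' := by
    rintro z ⟨hxΩ, t, w, ht, ht0, hw, hmem⟩
    choose c hc using fun m => Set.mem_iUnion.1 (hmem m)
    have hfreq : ∃ i, ∃ᶠ m in atTop, c m = i := by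
      by_contra h
      push_neg at h
      have h' : ∀ᶠ m in atTop, ∀ i, ¬ c m = i :=
        eventually_all.2 fun i => (h i)
      obtain ⟨m, hm⟩ := h'.exists
      exact hm (c m) rfl
    obtain ⟨i, hi⟩ := hfreq
    have hfreq' : ∃ᶠ m in atTop, x + t m • w m ∈ P i := by
      refine hi.mono fun m hm => ?_
      rw [← hm]; exact hc m
    have htend : Tendsto (fun m => x + t m • w m) atTop (𝓝 x) := by
      have h1 : Tendsto (fun m => t m • w m) atTop (𝓝 ((0:ℝ) • z)) := ht0.smul hw
      rw [zero_smul] at h1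
      simpa using tendsto_const_nhds.add h1
    have hxi : x ∈ P i := by
      have := mem_closure_of_frequently_of_tendsto hfreq' htend
      rwa [(hPclosed i).closure_eq] at this
    have hact : ∀ j, a i j x = b i j → a i j z ≤ 0 := by
      intro j hj
      by_contra hpos
      push_neg at hpos
      have hev : ∀ᶠ m in atTop, 0 < a i j (w m) := by
        have h1 : Tendsto (fun m => a i j (w m)) atTop (𝓝 (a i j z)) :=
          ((a i j).continuous.tendsto z).comp hw
        exact h1.eventually (eventually_gt_nhds hpos)
      obtain ⟨m, hmi, hm0⟩ := (hfreq'.and_eventually hev).exists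
      have hle := ((hmemP i _).1 hmi) j
      rw [map_add, map_smul, smul_eq_mul] at hle
      nlinarith [ht m]
    refine Set.mem_iUnion.2 ⟨i, ?_⟩
    simp only [hC, if_pos hxi, Set.mem_setOf_eq]
    intro j
    by_cases hj : a i j x = b i j
    · rw [if_pos hj]; exact hact j hj
    · rw [if_neg hj]
  have hEq : tcone (⋃ i', P i') x = ⋃ i', C i' :=
    Set.Subset.antisymm hsup (Set.iUnion_subset hsub)
  have hCpoly : ∀ i, IsPolyhedron (C i) := by
    intro i
    by_cases hxi : x ∈ P i
    · refine ⟨k i, fun j => if a i j x = b i j then a i j else 0, fun _ => 0, ?_⟩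
      simp only [hC, if_pos hxi]
      ext z
      refine forall_congr' fun j => ?_
      by_cases hj : a i j x = b i j <;> simp [hj]
    · rw [hC]; simp only [if_neg hxi]
      exact isPolyhedron_empty
  -- locality
  have hwit : ∀ i, x ∉ P i → ∃ j, b i j < a i j x := by
    intro i hxi
    by_contra h
    push_neg at h
    exact hxi ((hmemP i x).2 h)
  set V : Fin p → Set E' := fun i =>
    if h : x ∈ P i then {z | ∀ j, a i j x < b i j → a i j z < b i j - a i j x}
    else {z | b i (hwit i h).choose - a i (hwit i h).choose x < a i (hwit i h).choose z} with hV
  have hVopen : ∀ i, IsOpen (V i) := by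
    intro i
    rw [hV]; dsimp only
    split_ifs with h
    · have heq : {z : E' | ∀ j, a i j x < b i j → a i j z < b i j - a i j x}
          = ⋂ j, {z | a i j x < b i j → a i j z < b i j - a i j x} := by
        ext z; simp [Set.mem_iInter]
      rw [heq]
      refine isOpen_iInter_of_finite fun j => ?_
      by_cases hj : a i j x < b i j
      · have heq2 : {z : E' | a i j x < b i j → a i j z < b i j - a i j x}
            = {z | a i j z < b i j - a i j x} := by ext z; simp [hj]
        rw [heq2]
        exact isOpen_lt (a i j).continuous continuous_const
      · have heq2 : {z : E' | a i j x < b i j → a i j z < b i j - a i j x} = Set.univ := by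
          ext z; simp [hj]
        rw [heq2]; exact isOpen_univ
    · exact isOpen_lt continuous_const (a i _).continuous
  have hV0 : ∀ i, (0:E') ∈ V i := by
    intro i
    rw [hV]; dsimp only
    split_ifs with h
    · intro j hj
      simp only [map_zero]
      linarith
    · simp only [Set.mem_setOf_eq, map_zero]
      linarith [(hwit i h).choose_spec]
  obtain ⟨ε, hε, hball⟩ := Metric.isOpen_iff.1 (isOpen_iInter_of_finite hVopen) 0
    (Set.mem_iInter.2 hV0)
  refine ⟨⟨p, C, hCpoly, hEq⟩, ε, hε, fun z hz => ?_⟩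
  have hzV : ∀ i, z ∈ V i := Set.mem_iInter.1 (hball (mem_ball_zero_iff.2 hz))
  constructor
  · intro hxz
    obtain ⟨i, hi⟩ := Set.mem_iUnion.1 hxz
    have hxi : x ∈ P i := by
      by_contra h
      have hzi := hzV i
      rw [hV] at hzi; dsimp only at hzi; rw [dif_neg h] at hzi
      have h2 := ((hmemP i _).1 hi) (hwit i h).choose
      rw [map_add] at h2
      simp only [Set.mem_setOf_eq] at hzi
      linarith
    refine hsub i ?_
    simp only [hC, if_pos hxi, Set.mem_setOf_eq]
    intro j
    by_cases hj : a i j x = b i j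
    · rw [if_pos hj]
      have h2 := ((hmemP i _).1 hi) j
      rw [map_add] at h2
      linarith
    · rw [if_neg hj]
  · intro hzT
    obtain ⟨i, hzi⟩ := Set.mem_iUnion.1 (hsup hzT)
    have hxi : x ∈ P i := by
      by_contra h
      rw [hC] at hzi; dsimp only at hzi; rw [if_neg h] at hzi
      exact absurd hzi (Set.notMem_empty z)
    rw [hC] at hzi; dsimp only at hzi; rw [if_pos hxi] at hzi
    simp only [Set.mem_setOf_eq] at hzi
    have hzVi := hzV i
    rw [hV] at hzVi; dsimp only at hzVi; rw [dif_pos hxi] at hzVi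
    simp only [Set.mem_setOf_eq] at hzVi
    refine Set.mem_iUnion.2 ⟨i, (hmemP i _).2 fun j => ?_⟩
    rw [map_add]
    by_cases hj : a i j x = b i j
    · have h := hzi j; rw [if_pos hj] at h
      linarith
    · have hlt : a i j x < b i j := lt_of_le_of_ne (((hmemP i x).1 hxi) j) hj
      have h := hzVi j hlt
      linarith

end AuxLemmas3
lemma aux_tendsto_apply {E' : Type*} [NormedAddCommGroup E'] [NormedSpace ℝ E']
    {ξk : ℕ → (E' →L[ℝ] ℝ)} {μ : E' →L[ℝ] ℝ} (h : Tendsto ξk atTop (𝓝 μ)) (v : E') :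
    Tendsto (fun m => ξk m v) atTop (𝓝 (μ v)) :=
  ((ContinuousLinearMap.apply ℝ ℝ v).continuous.tendsto μ).comp h

set_option maxHeartbeats 2000000 in

/-- Lemma 3.18: under LICQ(u) the multiplier set `Λ⁰(x̄;u)` is empty for any
splitting of the constraints. -/
theorem stmt16 {n m₁ m₂ : ℕ}
    (F₁ : Euc n → Euc m₁) (F₂ : Euc n → Euc m₂)
    (hF₁ : ContDiff ℝ 1 F₁) (hF₂ : ContDiff ℝ 1 F₂)
    (Ω₁ : Set (Euc m₁)) (Ω₂ : Set (Euc m₂))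
    (hΩ₁ : IsFinUnionPolyhedra Ω₁) (hΩ₂ : IsFinUnionPolyhedra Ω₂)
    (xb : Euc n) (hx₁ : F₁ xb ∈ Ω₁) (hx₂ : F₂ xb ∈ Ω₂)
    (u : Euc n)
    (hu : fderiv ℝ (PairMap F₁ F₂) xb u ∈ tcone (Ω₁ ×ˢ Ω₂) (PairMap F₁ F₂ xb))
    (hLICQ : ∃ L : Submodule ℝ (Euc m₁ × Euc m₂),
      (∀ z ∈ tcone (tcone (Ω₁ ×ˢ Ω₂) (PairMap F₁ F₂ xb))
          (fderiv ℝ (PairMap F₁ F₂) xb u), ∀ w ∈ L,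
        z + w ∈ tcone (tcone (Ω₁ ×ˢ Ω₂) (PairMap F₁ F₂ xb))
          (fderiv ℝ (PairMap F₁ F₂) xb u)) ∧
      LinearMap.range (fderiv ℝ (PairMap F₁ F₂) xb).toLinearMap ⊔ L = ⊤) :
    {μ : (Euc m₁ × Euc m₂) →L[ℝ] ℝ |
      μ ∈ dlnc (Ω₁ ×ˢ Ω₂) (PairMap F₁ F₂ xb) (fderiv ℝ (PairMap F₁ F₂) xb u) ∧
      μ.comp (fderiv ℝ (PairMap F₁ F₂) xb) = 0 ∧
      μ.comp (ContinuousLinearMap.inl ℝ (Euc m₁) (Euc m₂)) ≠ 0} = ∅ := by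
  classical
  obtain ⟨L, hinv, hsup⟩ := hLICQ
  set A := fderiv ℝ (PairMap F₁ F₂) xb with hA
  set yb := PairMap F₁ F₂ xb with hyb
  set d := A u with hd
  set Ω' := Ω₁ ×ˢ Ω₂ with hΩ'
  have hΩfin : IsFinUnionPolyhedra Ω' := isFinUnionPolyhedra_prod hΩ₁ hΩ₂
  have hyΩ : yb ∈ Ω' := ⟨hx₁, hx₂⟩
  obtain ⟨hTfin, ε₁, hε₁, hloc₁⟩ := tcone_struct hΩfin hyΩ
  obtain ⟨_, ε₂, hε₂, hloc₂⟩ := tcone_struct hTfin hu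
  ext μ
  rw [Set.mem_empty_iff_false, iff_false]
  rintro ⟨hdl, hc, hne⟩
  obtain ⟨hyΩ', t, w, ξ, ht, ht0, hw, hξ, hfnc⟩ := hdl
  have hμL : ∀ v ∈ L, μ v ≤ 0 := by
    intro v hv
    have hev : ∀ᶠ m in atTop, (ξ m) v ≤ 0 := by
      set σ₁ : ℝ := ε₂ / (2 * (‖v‖ + 1)) with hσ₁
      have hσ₁pos : 0 < σ₁ := by positivity
      have e1 : ∀ᶠ m in atTop, ‖w m - d‖ < ε₂ / 2 := by
        have h1 : Tendsto (fun m => ‖w m - d‖) atTop (𝓝 0) :=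
          tendsto_iff_norm_sub_tendsto_zero.1 hw
        exact h1.eventually_lt_const (by linarith)
      have e2 : ∀ᶠ m in atTop, t m * ‖w m‖ < ε₁ := by
        have h1 : Tendsto (fun m => t m * ‖w m‖) atTop (𝓝 (0 * ‖d‖)) := ht0.mul hw.norm
        rw [zero_mul] at h1
        exact h1.eventually_lt_const hε₁
      have e3 : ∀ᶠ m in atTop, t m * (‖w m‖ + σ₁ * ‖v‖) < ε₁ := by
        have h1 : Tendsto (fun m => t m * (‖w m‖ + σ₁ * ‖v‖)) atTop
            (𝓝 (0 * (‖d‖ + σ₁ * ‖v‖))) := ht0.mul (hw.norm.add tendsto_const_nhds)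
        rw [zero_mul] at h1
        exact h1.eventually_lt_const hε₁
      filter_upwards [e1, e2, e3] with m h1 h2 h3
      have htm := ht m
      refine fnc_nonpos (hfnc m) ⟨t m * σ₁, by positivity, fun s hs hs' => ?_⟩
      set σ : ℝ := s / t m with hσ
      have hσpos : 0 < σ := div_pos hs htm
      have hσle : σ ≤ σ₁ := by
        rw [hσ, div_le_iff₀ htm]
        linarith [hs']
      have hwmΩ : yb + t m • w m ∈ Ω' := (hfnc m).1
      have hwmT : t m • w m ∈ tcone Ω' yb := by
        refine (hloc₁ _ ?_).1 hwmΩ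
        rw [norm_smul, Real.norm_eq_abs, abs_of_pos htm]
        exact h2
      have hwT : w m ∈ tcone Ω' yb := by
        have h4 := tcone_smul hwmT (inv_pos.2 htm)
        rwa [smul_smul, inv_mul_cancel₀ (ne_of_gt htm), one_smul] at h4
      have hzK : w m - d ∈ tcone (tcone Ω' yb) d := by
        refine (hloc₂ _ ?_).1 ?_
        · linarith [(half_lt_self hε₂ : ε₂ / 2 < ε₂)]
        · simpa using hwT
      have hzK2 : (w m - d) + σ • v ∈ tcone (tcone Ω' yb) d :=
        hinv _ hzK _ (Submodule.smul_mem L σ hv)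
      have hσv : ‖σ • v‖ ≤ ε₂ / 2 := by
        rw [norm_smul, Real.norm_eq_abs, abs_of_pos hσpos]
        have hh : σ * ‖v‖ ≤ σ₁ * ‖v‖ := mul_le_mul_of_nonneg_right hσle (norm_nonneg v)
        have hh2 : σ₁ * ‖v‖ ≤ ε₂ / 2 := by
          rw [hσ₁, div_mul_eq_mul_div, div_le_iff₀ (by positivity : (0:ℝ) < 2 * (‖v‖ + 1))]
          nlinarith [norm_nonneg v, hε₂.le]
        linarith
      have h2T : w m + σ • v ∈ tcone Ω' yb := by
        have hn : ‖(w m - d) + σ • v‖ < ε₂ := by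
          calc ‖(w m - d) + σ • v‖ ≤ ‖w m - d‖ + ‖σ • v‖ := norm_add_le _ _
            _ < ε₂ := by linarith
        have h5 := (hloc₂ _ hn).2 hzK2
        have heq : d + (w m - d + σ • v) = w m + σ • v := by abel
        rwa [heq] at h5
      have h3T : t m • (w m + σ • v) ∈ tcone Ω' yb := tcone_smul h2T htm
      have h4 : yb + t m • (w m + σ • v) ∈ Ω' := by
        refine (hloc₁ _ ?_).2 h3T
        rw [norm_smul, Real.norm_eq_abs, abs_of_pos htm]
        have hh : ‖w m + σ • v‖ ≤ ‖w m‖ + σ₁ * ‖v‖ := by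
          calc ‖w m + σ • v‖ ≤ ‖w m‖ + ‖σ • v‖ := norm_add_le _ _
            _ ≤ ‖w m‖ + σ₁ * ‖v‖ := by
                rw [norm_smul, Real.norm_eq_abs, abs_of_pos hσpos]
                have := mul_le_mul_of_nonneg_right hσle (norm_nonneg v)
                linarith
        calc t m * ‖w m + σ • v‖ ≤ t m * (‖w m‖ + σ₁ * ‖v‖) :=
              mul_le_mul_of_nonneg_left hh htm.le
          _ < ε₁ := h3
      have heq2 : t m • (w m + σ • v) = t m • w m + s • v := by
        rw [smul_add, smul_smul, hσ, mul_div_cancel₀ _ (ne_of_gt htm)]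
      rw [heq2, ← add_assoc] at h4
      exact h4
    exact le_of_tendsto (aux_tendsto_apply hξ v) hev
  have hμ0 : μ = 0 := by
    refine ContinuousLinearMap.ext fun y => ?_
    have hy : y ∈ (⊤ : Submodule ℝ (Euc m₁ × Euc m₂)) := trivial
    rw [← hsup] at hy
    obtain ⟨y₁, hy₁, y₂, hy₂, rfl⟩ := Submodule.mem_sup.1 hy
    obtain ⟨x₁, rfl⟩ := hy₁
    have h1 : μ (A.toLinearMap x₁) = 0 := by
      have := ContinuousLinearMap.ext_iff.1 hc x₁
      simpa using this
    have h2 : μ y₂ = 0 := by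
      have ha := hμL y₂ hy₂
      have hb := hμL (-y₂) (neg_mem hy₂)
      rw [map_neg] at hb
      linarith
    rw [map_add, h1, h2]
    simp
  rw [hμ0] at hne
  apply hne
  ext z
  simp
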